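/- arXiv:2008.04290 — 2 statements merged into one kernel-verified Lean document; each statement's English description precedes it below -/
import Mathlib

section
/- Let (M_k)_{k∈ℕ} be a martingale with respect to a filtration (𝓕_k)_{k∈ℕ} on a probability space, with M_0 = 0 and |M_k − M_{k−1}| ≤ K almost surely for every k ≥ 1, where K ≥ 0. Then for every n ≥ 1, E[ M_n⁴ ] ≤ 7 K⁴ n². -/
open MeasureTheory

section Aux

variable {Ω : Type*} {m0 : MeasurableSpace Ω} {μ : Measure Ω} [IsProbabilityMeasure μ]

/-- Integral of an `ℱ k`-measurable function times a martingale increment vanishes. -/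
lemma aux_cross_zero (ℱ : Filtration ℕ m0) (M : ℕ → Ω → ℝ) (hM : Martingale M ℱ μ) (k : ℕ)
    (g : Ω → ℝ) (hg : StronglyMeasurable[ℱ k] g)
    (hint : Integrable (fun ω => g ω * (M (k + 1) ω - M k ω)) μ) :
    ∫ ω, g ω * (M (k + 1) ω - M k ω) ∂μ = 0 := by
  have hm : ℱ k ≤ m0 := ℱ.le k
  have hsub : Integrable (fun ω => M (k + 1) ω - M k ω) μ :=
    (hM.integrable (k + 1)).sub (hM.integrable k)
  have h1 : μ[(fun ω => g ω * (M (k + 1) ω - M k ω))|ℱ k]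
      =ᵐ[μ] g * μ[(fun ω => M (k + 1) ω - M k ω)|ℱ k] := by
    have := condExp_mul_of_stronglyMeasurable_left (μ := μ) hg
      (f := g) (g := fun ω => M (k + 1) ω - M k ω) hint hsub
    exact this
  have h2 : μ[(fun ω => M (k + 1) ω - M k ω)|ℱ k] =ᵐ[μ] 0 := by
    have hsub' : (fun ω => M (k + 1) ω - M k ω) = M (k + 1) - M k := rfl
    rw [hsub']
    have h3 := condExp_sub (μ := μ) (m := ℱ k) (hM.integrable (k + 1)) (hM.integrable k)
    refine h3.trans ?_
    have h4 : μ[M (k + 1)|ℱ k] =ᵐ[μ] M k := hM.condExp_ae_eq (Nat.le_succ k)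
    have h5 : μ[M k|ℱ k] =ᵐ[μ] M k := hM.condExp_ae_eq (le_refl k)
    filter_upwards [h4, h5] with ω h4 h5
    simp [h4, h5]
  have h6 : μ[(fun ω => g ω * (M (k + 1) ω - M k ω))|ℱ k] =ᵐ[μ] 0 := by
    refine h1.trans ?_
    filter_upwards [h2] with ω h2
    simp [h2]
  calc ∫ ω, g ω * (M (k + 1) ω - M k ω) ∂μ
      = ∫ ω, (μ[(fun ω => g ω * (M (k + 1) ω - M k ω))|ℱ k]) ω ∂μ :=
        (integral_condExp hm).symm
    _ = ∫ ω, (0 : Ω → ℝ) ω ∂μ := integral_congr_ae h6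
    _ = 0 := by simp

end Aux

/-- fourth-moment bound for bounded-increment martingales.
Let `(M k)` be a martingale with `M 0 = 0` and increments bounded by `K ≥ 0`
almost surely.  Then for every `n ≥ 1`, `E[M n ^ 4] ≤ 7 K⁴ n²`. -/
theorem martingale_fourth_moment_bound
    {Ω : Type*} {m0 : MeasurableSpace Ω} {μ : Measure Ω} [IsProbabilityMeasure μ]
    (ℱ : Filtration ℕ m0) (M : ℕ → Ω → ℝ) (K : ℝ) (hK : 0 ≤ K)
    (hM : Martingale M ℱ μ)
    (hM0 : ∀ᵐ ω ∂μ, M 0 ω = 0)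
    (hbdd : ∀ k : ℕ, 1 ≤ k → ∀ᵐ ω ∂μ, |M k ω - M (k - 1) ω| ≤ K) :
    ∀ n : ℕ, 1 ≤ n → (∫ ω, (M n ω) ^ 4 ∂μ) ≤ 7 * K ^ 4 * (n : ℝ) ^ 2 := by
  -- increments are bounded
  have hd : ∀ k : ℕ, ∀ᵐ ω ∂μ, |M (k + 1) ω - M k ω| ≤ K := by
    intro k
    have h := hbdd (k + 1) (Nat.le_add_left 1 k)
    simpa using h
  -- a.e. bound on `M k`
  have hMb : ∀ k : ℕ, ∀ᵐ ω ∂μ, |M k ω| ≤ K * k := by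
    intro k
    induction k with
    | zero => filter_upwards [hM0] with ω h; simp [h]
    | succ k ih =>
      filter_upwards [ih, hd k] with ω h1 h2
      have h3 : |M (k + 1) ω| ≤ |M k ω| + |M (k + 1) ω - M k ω| := by
        have := abs_add_le (M k ω) (M (k + 1) ω - M k ω)
        simpa using this
      push_cast
      nlinarith
  -- integrability helper
  have hintf : ∀ (f : Ω → ℝ) (C : ℝ), AEStronglyMeasurable f μ →
      (∀ᵐ ω ∂μ, |f ω| ≤ C) → Integrable f μ := by
    intro f C hf hb
    refine (integrable_const C).mono' hf ?_
    simpa [Real.norm_eq_abs] using hb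
  have hsm : ∀ k : ℕ, AEStronglyMeasurable (M k) μ := fun k =>
    (hM.integrable k).aestronglyMeasurable
  have hintpow : ∀ k p : ℕ, Integrable (fun ω => (M k ω) ^ p) μ := by
    intro k p
    refine hintf _ ((K * k) ^ p) ((hsm k).pow p) ?_
    filter_upwards [hMb k] with ω h
    calc |(M k ω) ^ p| = |M k ω| ^ p := by rw [abs_pow]
      _ ≤ (K * k) ^ p := pow_le_pow_left₀ (abs_nonneg _) h p
  have hintcross : ∀ k p : ℕ,
      Integrable (fun ω => (M k ω) ^ p * (M (k + 1) ω - M k ω)) μ := by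
    intro k p
    refine hintf _ ((K * k) ^ p * K) (((hsm k).pow p).mul ((hsm (k + 1)).sub (hsm k))) ?_
    filter_upwards [hMb k, hd k] with ω h1 h2
    rw [abs_mul, abs_pow]
    exact mul_le_mul (pow_le_pow_left₀ (abs_nonneg _) h1 p) h2 (abs_nonneg _)
      (by positivity)
  -- cross terms vanish
  have hcross : ∀ k p : ℕ, ∫ ω, (M k ω) ^ p * (M (k + 1) ω - M k ω) ∂μ = 0 := by
    intro k p
    exact aux_cross_zero ℱ M hM k _ ((hM.stronglyAdapted k).pow p) (hintcross k p)
  -- second moment bound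
  have h2 : ∀ k : ℕ, ∫ ω, (M k ω) ^ 2 ∂μ ≤ K ^ 2 * k := by
    intro k
    induction k with
    | zero =>
      have : ∫ ω, (M 0 ω) ^ 2 ∂μ = ∫ _ω, (0 : ℝ) ∂μ := by
        refine integral_congr_ae ?_
        filter_upwards [hM0] with ω h; simp [h]
      simp [this]
    | succ k ih =>
      have hle : ∫ ω, (M (k + 1) ω) ^ 2 ∂μ
          ≤ ∫ ω, ((M k ω) ^ 2 + 2 * ((M k ω) ^ 1 * (M (k + 1) ω - M k ω)) + K ^ 2) ∂μ := by
        refine integral_mono_ae (hintpow (k + 1) 2)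
          (((hintpow k 2).add ((hintcross k 1).const_mul 2)).add (integrable_const _)) ?_
        filter_upwards [hd k] with ω h
        have habs := abs_le.mp h
        nlinarith [sq_nonneg (M (k + 1) ω - M k ω)]
      have i2 : Integrable (fun ω => 2 * ((M k ω) ^ 1 * (M (k + 1) ω - M k ω))) μ :=
        (hintcross k 1).const_mul 2
      have i12 : Integrable
          (fun ω => (M k ω) ^ 2 + 2 * ((M k ω) ^ 1 * (M (k + 1) ω - M k ω))) μ :=
        (hintpow k 2).add i2
      have heq : ∫ ω, ((M k ω) ^ 2 + 2 * ((M k ω) ^ 1 * (M (k + 1) ω - M k ω)) + K ^ 2) ∂μ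
          = ∫ ω, (M k ω) ^ 2 ∂μ
            + 2 * ∫ ω, (M k ω) ^ 1 * (M (k + 1) ω - M k ω) ∂μ + K ^ 2 := by
        rw [integral_add i12 (integrable_const _), integral_add (hintpow k 2) i2,
          integral_const_mul]
        simp
      rw [heq, hcross k 1] at hle
      push_cast
      linarith
  -- fourth moment bound
  have h4 : ∀ k : ℕ, ∫ ω, (M k ω) ^ 4 ∂μ ≤ 4 * K ^ 4 * (k : ℝ) ^ 2 := by
    intro k
    induction k with
    | zero =>
      have : ∫ ω, (M 0 ω) ^ 4 ∂μ = ∫ _ω, (0 : ℝ) ∂μ := by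
        refine integral_congr_ae ?_
        filter_upwards [hM0] with ω h; simp [h]
      simp [this]
    | succ k ih =>
      have hle : ∫ ω, (M (k + 1) ω) ^ 4 ∂μ
          ≤ ∫ ω, ((M k ω) ^ 4 + 4 * ((M k ω) ^ 3 * (M (k + 1) ω - M k ω))
              + 8 * K ^ 2 * (M k ω) ^ 2 + 3 * K ^ 4) ∂μ := by
        refine integral_mono_ae (hintpow (k + 1) 4)
          ((((hintpow k 4).add ((hintcross k 3).const_mul 4)).add
            ((hintpow k 2).const_mul (8 * K ^ 2))).add (integrable_const _)) ?_
        filter_upwards [hd k] with ω h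
        set a := M k ω with ha
        set e := M (k + 1) ω with he
        have hid : e ^ 4 = a ^ 4 + 4 * (a ^ 3 * (e - a)) + 6 * a ^ 2 * (e - a) ^ 2
            + 4 * a * (e - a) ^ 3 + (e - a) ^ 4 := by ring
        set d := e - a with hdd
        have hd2 : d ^ 2 ≤ K ^ 2 := by nlinarith [abs_le.mp h, abs_nonneg d]
        have hd4 : d ^ 4 ≤ K ^ 4 := by nlinarith [sq_nonneg d, sq_nonneg (d^2 - K^2)]
        have hcube : 4 * a * d ^ 3 ≤ 4 * |a| * K ^ 3 := by
          have h1 : 4 * a * d ^ 3 ≤ |4 * a * d ^ 3| := le_abs_self _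
          have h2 : |4 * a * d ^ 3| = 4 * |a| * |d| ^ 3 := by
            rw [abs_mul, abs_mul, abs_pow]; simp [abs_of_nonneg]
          have h3 : |d| ^ 3 ≤ K ^ 3 := pow_le_pow_left₀ (abs_nonneg _) h 3
          have ha0 : (0:ℝ) ≤ |a| := abs_nonneg _
          nlinarith
        have hlast : 4 * |a| * K ^ 3 ≤ 2 * K ^ 2 * a ^ 2 + 2 * K ^ 4 := by
          nlinarith [sq_nonneg (|a| * K - K ^ 2), sq_abs a]
        have h6 : 6 * a ^ 2 * d ^ 2 ≤ 6 * K ^ 2 * a ^ 2 := by nlinarith [sq_nonneg a]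
        have := sq_abs a
        nlinarith
      have j2 : Integrable (fun ω => 4 * ((M k ω) ^ 3 * (M (k + 1) ω - M k ω))) μ :=
        (hintcross k 3).const_mul 4
      have j3 : Integrable (fun ω => 8 * K ^ 2 * (M k ω) ^ 2) μ :=
        (hintpow k 2).const_mul (8 * K ^ 2)
      have j12 : Integrable
          (fun ω => (M k ω) ^ 4 + 4 * ((M k ω) ^ 3 * (M (k + 1) ω - M k ω))) μ :=
        (hintpow k 4).add j2
      have j123 : Integrable (fun ω => (M k ω) ^ 4
          + 4 * ((M k ω) ^ 3 * (M (k + 1) ω - M k ω)) + 8 * K ^ 2 * (M k ω) ^ 2) μ :=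
        j12.add j3
      have heq : ∫ ω, ((M k ω) ^ 4 + 4 * ((M k ω) ^ 3 * (M (k + 1) ω - M k ω))
              + 8 * K ^ 2 * (M k ω) ^ 2 + 3 * K ^ 4) ∂μ
          = ∫ ω, (M k ω) ^ 4 ∂μ
            + 4 * ∫ ω, (M k ω) ^ 3 * (M (k + 1) ω - M k ω) ∂μ
            + 8 * K ^ 2 * ∫ ω, (M k ω) ^ 2 ∂μ + 3 * K ^ 4 := by
        rw [integral_add j123 (integrable_const _), integral_add j12 j3,
          integral_add (hintpow k 4) j2, integral_const_mul, integral_const_mul]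
        simp
      rw [heq, hcross k 3] at hle
      have h2' := h2 k
      have hK4 : (0:ℝ) ≤ K ^ 4 := by positivity
      have hK2 : (0:ℝ) ≤ K ^ 2 := by positivity
      push_cast
      push_cast at ih
      nlinarith [mul_le_mul_of_nonneg_left h2' hK2]
  intro n _hn
  have := h4 n
  have hpos : (0:ℝ) ≤ K ^ 4 * (n : ℝ) ^ 2 := by positivity
  nlinarith
end

section
/- Let (S, 𝒮, μ) be a probability space, let V₀ > 0, let R : S × S → ℝ be measurable with 0 ≤ R ≤ V₀ everywhere, and set Ψ(y) = ∫_S R(x, y) μ(dx). Then for every δ > 0 and every integer k ≥ 1, μ^{⊗(k+1)}( { (x₁, …, x_{k+1}) : R(x_i, x_{k+1}) < δ for all 1 ≤ i ≤ k } ) ≤ exp( −k δ / (2V₀) ) + μ( { y : Ψ(y) ≤ 2δ } ). -/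
open MeasureTheory

/-- replica / Paley–Zygmund overlap estimate.  Let `(S, μ)` be a
probability space, `V₀ > 0`, and let `R : S × S → ℝ` be measurable with
`0 ≤ R ≤ V₀`.  Set `Ψ y = ∫ R(x,y) μ(dx)`.  Then for every `δ > 0` and every
integer `k ≥ 1`,
`μ^{⊗(k+1)}({x : ∀ i ≤ k, R(xᵢ, x_{k+1}) < δ}) ≤ exp(-kδ/(2V₀)) + μ({y : Ψ y ≤ 2δ})`. -/
theorem replica_overlap_bound
    {S : Type*} [MeasurableSpace S] (μ : Measure S) [IsProbabilityMeasure μ]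
    (V₀ : ℝ) (hV₀ : 0 < V₀)
    (R : S × S → ℝ) (hRmeas : Measurable R)
    (hR0 : ∀ p, 0 ≤ R p) (hRV : ∀ p, R p ≤ V₀)
    (δ : ℝ) (hδ : 0 < δ) (k : ℕ) (hk : 1 ≤ k) :
    (Measure.pi fun _ : Fin (k + 1) => μ)
        {x | ∀ i : Fin k, R (x i.castSucc, x (Fin.last k)) < δ}
      ≤ ENNReal.ofReal (Real.exp (-(k * δ) / (2 * V₀)))
        + μ {y | (∫ x, R (x, y) ∂μ) ≤ 2 * δ} := by
  classical
  set A : S → Set S := fun y => {x | R (x, y) < δ} with hA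
  have hAmeas : ∀ y, MeasurableSet (A y) := fun y =>
    measurableSet_lt (hRmeas.comp (measurable_id.prodMk measurable_const)) measurable_const
  -- the product set in S × (Fin k → S)
  set s : Set (S × (Fin k → S)) := {p | ∀ i : Fin k, R (p.2 i, p.1) < δ} with hs
  have hsmeas : MeasurableSet s := by
    have : s = ⋂ i : Fin k, {p : S × (Fin k → S) | R (p.2 i, p.1) < δ} := by
      ext p; simp [hs]
    rw [this]
    refine MeasurableSet.iInter fun i => ?_
    exact measurableSet_lt
      (hRmeas.comp ((measurable_snd.comp measurable_id).eval.prodMk measurable_fst)) measurable_const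
  -- transport via piFinSuccAbove
  have hmp := measurePreserving_piFinSuccAbove (fun _ : Fin (k + 1) => μ) (Fin.last k)
  have hpre :
      {x : Fin (k+1) → S | ∀ i : Fin k, R (x i.castSucc, x (Fin.last k)) < δ}
        = (MeasurableEquiv.piFinSuccAbove (fun _ => S) (Fin.last k)) ⁻¹' s := by
    ext x
    simp [MeasurableEquiv.piFinSuccAbove, Fin.insertNthEquiv, Fin.removeNth,
      Fin.succAbove_last, hs, Fin.init]
  have key : (Measure.pi fun _ : Fin (k + 1) => μ)
      {x | ∀ i : Fin k, R (x i.castSucc, x (Fin.last k)) < δ}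
      = ∫⁻ y, (μ (A y)) ^ k ∂μ := by
    rw [hpre, MeasureTheory.MeasurePreserving.measure_preimage hmp hsmeas.nullMeasurableSet]
    rw [Measure.prod_apply hsmeas]
    congr 1
    ext y
    have : (Prod.mk y ⁻¹' s) = Set.pi Set.univ (fun _ : Fin k => A y) := by
      ext x; simp [hs, hA]
    rw [this, Measure.pi_pi]
    simp
  rw [key]
  -- pointwise bound on the complement of {Ψ ≤ 2δ}
  set B : Set S := {y | (∫ x, R (x, y) ∂μ) ≤ 2 * δ} with hB
  have hBmeas : MeasurableSet B := by
    have hΨ : Measurable fun y => ∫ x, R (x, y) ∂μ :=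
      (hRmeas.stronglyMeasurable.integral_prod_left').measurable
    exact measurableSet_le hΨ measurable_const
  have hbound : ∀ y, (μ (A y)) ^ k
      ≤ ENNReal.ofReal (Real.exp (-(k * δ) / (2 * V₀))) + B.indicator 1 y := by
    intro y
    by_cases hy : y ∈ B
    · calc (μ (A y)) ^ k ≤ 1 ^ k := pow_le_pow_left' prob_le_one k
        _ = 1 := one_pow k
        _ ≤ _ := by simp [Set.indicator_of_mem hy]
    · -- Ψ y > 2δ
      have hΨy : 2 * δ < ∫ x, R (x, y) ∂μ := lt_of_not_ge hy
      have hint : Integrable (fun x => R (x, y)) μ := by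
        refine ⟨(hRmeas.comp (measurable_id.prodMk measurable_const)).aestronglyMeasurable, ?_⟩
        refine HasFiniteIntegral.of_bounded (C := V₀) ?_
        filter_upwards with x
        rw [Real.norm_eq_abs, abs_le]
        exact ⟨le_trans (by linarith) (hR0 (x, y)), hRV (x, y)⟩
      set p : ℝ := (μ (A y)).toReal with hp
      have hple : μ (A y) ≤ 1 := prob_le_one
      have hp1 : p ≤ 1 := by
        rw [hp]
        simpa using ENNReal.toReal_mono (by simp) hple
      have hp0 : 0 ≤ p := ENNReal.toReal_nonneg
      have hcompl : (μ (A y)ᶜ).toReal = 1 - p := by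
        rw [prob_compl_eq_one_sub (hAmeas y)]
        rw [ENNReal.toReal_sub_of_le hple (by simp)]
        simp [hp]
      -- split the integral
      have hsplit : (∫ x, R (x, y) ∂μ)
          = (∫ x in A y, R (x, y) ∂μ) + ∫ x in (A y)ᶜ, R (x, y) ∂μ :=
        (integral_add_compl (hAmeas y) hint).symm
      have h1 : (∫ x in A y, R (x, y) ∂μ) ≤ δ * p := by
        have := norm_setIntegral_le_of_norm_le_const (μ := μ) (s := A y)
          (f := fun x => R (x, y)) (C := δ) (measure_lt_top μ _)
          (fun x hx => by
            rw [Real.norm_eq_abs, abs_of_nonneg (hR0 _)]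
            exact le_of_lt hx)
        exact le_trans (le_abs_self _) this
      have h2 : (∫ x in (A y)ᶜ, R (x, y) ∂μ) ≤ V₀ * (1 - p) := by
        have := norm_setIntegral_le_of_norm_le_const (μ := μ) (s := (A y)ᶜ)
          (f := fun x => R (x, y)) (C := V₀) (measure_lt_top μ _)
          (fun x _ => by
            rw [Real.norm_eq_abs, abs_of_nonneg (hR0 _)]
            exact hRV _)
        unfold Measure.real at this
        rw [hcompl] at this
        exact le_trans (le_abs_self _) this
      have hkey : p ≤ 1 - δ / V₀ := by
        have h3 : 2 * δ < δ * p + V₀ * (1 - p) := by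
          calc 2 * δ < ∫ x, R (x, y) ∂μ := hΨy
            _ = _ := hsplit
            _ ≤ δ * p + V₀ * (1 - p) := add_le_add h1 h2
        have h4 : δ / V₀ ≤ 1 - p := by
          rw [div_le_iff₀ hV₀]; nlinarith
        linarith
      have hexp : p ≤ Real.exp (-(δ / V₀)) := by
        calc p ≤ 1 - δ / V₀ := hkey
          _ = -(δ / V₀) + 1 := by ring
          _ ≤ Real.exp (-(δ / V₀)) := Real.add_one_le_exp _
      have hmuA : μ (A y) = ENNReal.ofReal p := by
        rw [hp, ENNReal.ofReal_toReal (measure_ne_top μ _)]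
      have : (μ (A y)) ^ k ≤ ENNReal.ofReal (Real.exp (-(k * δ) / (2 * V₀))) := by
        rw [hmuA, ← ENNReal.ofReal_pow hp0]
        refine ENNReal.ofReal_le_ofReal ?_
        calc p ^ k ≤ (Real.exp (-(δ / V₀))) ^ k := pow_le_pow_left₀ hp0 hexp k
          _ = Real.exp (k * -(δ / V₀)) := by rw [← Real.exp_nat_mul]
          _ ≤ Real.exp (-(k * δ) / (2 * V₀)) := by
            apply Real.exp_le_exp.2
            have h5 : (k:ℝ) * -(δ / V₀) = -((k * δ) / V₀) := by ring
            rw [h5, neg_div, neg_le_neg_iff]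
            exact div_le_div_of_nonneg_left (by positivity) hV₀ (by linarith)
      calc (μ (A y)) ^ k ≤ _ := this
        _ ≤ _ := le_self_add
  calc ∫⁻ y, (μ (A y)) ^ k ∂μ
      ≤ ∫⁻ y, (ENNReal.ofReal (Real.exp (-(k * δ) / (2 * V₀))) + B.indicator 1 y) ∂μ :=
        lintegral_mono hbound
    _ = ENNReal.ofReal (Real.exp (-(k * δ) / (2 * V₀))) + μ B := by
        rw [lintegral_add_left measurable_const, lintegral_indicator hBmeas _]
        simp
end
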